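/- Let d ≥ 1 be an integer, θ > 0, and let N(d,θ) > 0 be the constant such that x ↦ N(d,θ)·exp(−‖x‖^θ) is a probability density on ℝ^d with respect to Lebesgue measure; let μ_θ be the corresponding probability measure. Let (Ω, F, P) be a probability space and (ω_q)_{q ∈ ℤ^d} a family of ℝ^d-valued random variables each having law μ_θ. Then there exist C > 0 and r₁ > 0 such that for every r ≥ r₁ and every nonempty set A ⊆ ℝ^d with diam(A) < r, P(there exists q ∈ ℤ^d with dist(q, A) ≥ r/2 and dist(q + ω_q, A) ≤ r/4) ≤ C·r^{2d}·exp(−(r/8)^θ). Here ‖·‖ is the Euclidean norm and dist the Euclidean distance. -/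

import Mathlib

open MeasureTheory

/-- The point of `ℝ^d` (with the Euclidean norm) corresponding to a lattice point `q ∈ ℤ^d`. -/
def latticePt (d : ℕ) (q : Fin d → ℤ) : EuclideanSpace ℝ (Fin d) :=
  WithLp.toLp 2 (fun i => (q i : ℝ))

section AuxLemmas
open Filter


lemma abs_apply_le_norm {d : ℕ} (x : EuclideanSpace ℝ (Fin d)) (i : Fin d) : |x i| ≤ ‖x‖ := by
  rw [EuclideanSpace.norm_eq, ← Real.sqrt_sq_eq_abs]
  apply Real.sqrt_le_sqrt
  have := Finset.single_le_sum (f := fun j => ‖x j‖ ^ 2) (fun j _ => by positivity)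
    (Finset.mem_univ i)
  simpa [Real.norm_eq_abs, sq_abs] using this

lemma summable_exp_nat (c θ : ℝ) (hc : 0 < c) (hθ : 0 < θ) :
    Summable (fun n : ℕ => Real.exp (-(c * (n : ℝ) ^ θ))) := by
  have ht0 : Tendsto (fun x : ℝ => (x ^ θ) ^ (2 / θ) * Real.exp (-c * x ^ θ)) atTop (nhds 0) :=
    (tendsto_rpow_mul_exp_neg_mul_atTop_nhds_zero (2 / θ) c hc).comp (tendsto_rpow_atTop hθ)
  have ht1 : Tendsto (fun x : ℝ => x ^ (2 : ℝ) * Real.exp (-(c * x ^ θ))) atTop (nhds 0) := by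
    refine ht0.congr' ?_
    filter_upwards [eventually_ge_atTop (0 : ℝ)] with x hx
    rw [← Real.rpow_mul hx, mul_div_cancel₀ _ hθ.ne', neg_mul]
  have ht2 : Tendsto (fun n : ℕ => ((n : ℝ)) ^ (2 : ℝ) * Real.exp (-(c * (n : ℝ) ^ θ)))
      atTop (nhds 0) := ht1.comp tendsto_natCast_atTop_atTop
  have hg : Summable (fun n : ℕ => (((n : ℝ)) ^ (2 : ℕ))⁻¹ ) := by
    rw [Real.summable_nat_pow_inv]
    norm_num
  apply summable_of_isBigO_nat hg
  rw [Asymptotics.isBigO_iff]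
  refine ⟨1, ?_⟩
  filter_upwards [ht2.eventually (gt_mem_nhds one_pos), eventually_ge_atTop 1] with n h1 h2
  have hn : (0 : ℝ) < (n : ℝ) ^ (2 : ℕ) := by positivity
  have hr : ((n : ℝ)) ^ (2 : ℝ) = ((n : ℝ)) ^ (2 : ℕ) := by
    rw [← Real.rpow_natCast (n : ℝ) 2]; norm_num
  rw [hr] at h1
  rw [Real.norm_eq_abs, Real.norm_eq_abs, abs_of_nonneg (Real.exp_nonneg _),
    abs_of_nonneg (by positivity), one_mul, inv_eq_one_div, le_div_iff₀ hn]
  nlinarith [Real.exp_nonneg (-(c * (n : ℝ) ^ θ))]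

lemma summable_exp_int (c θ : ℝ) (hc : 0 < c) (hθ : 0 < θ) :
    Summable (fun k : ℤ => Real.exp (-(c * |(k : ℝ)| ^ θ))) := by
  apply Summable.of_nat_of_neg
  · have := summable_exp_nat c θ hc hθ
    refine this.congr fun n => ?_
    simp
  · have := summable_exp_nat c θ hc hθ
    refine this.congr fun n => ?_
    simp

lemma tsum_pi_prod (g : ℤ → ENNReal) :
    ∀ n : ℕ, ∑' p : Fin n → ℤ, ∏ i, g (p i) = (∑' k : ℤ, g k) ^ n := by
  intro n
  induction n with
  | zero =>
      simp only [Finset.univ_eq_empty, Finset.prod_empty, pow_zero]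
      exact tsum_eq_single (fun (i : Fin 0) => (0:ℤ)) (fun b hb => by
        exact absurd (Subsingleton.elim b _) hb)
  | succ n ih =>
    rw [← (Fin.consEquiv (fun _ : Fin (n+1) => ℤ)).tsum_eq]
    rw [pow_succ]
    have key : ∀ x : ℤ × (Fin n → ℤ),
        (∏ i, g (((Fin.consEquiv (fun _ : Fin (n+1) => ℤ)) x) i)) =
          g x.1 * ∏ i, g (x.2 i) := by
      intro x
      rw [Fin.prod_univ_succ]
      simp [Fin.consEquiv]
    calc (∑' x : ℤ × (Fin n → ℤ), ∏ i, g (((Fin.consEquiv (fun _ : Fin (n+1) => ℤ)) x) i))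
        = ∑' x : ℤ × (Fin n → ℤ), g x.1 * ∏ i, g (x.2 i) := by
          exact tsum_congr key
      _ = ∑' (k : ℤ) (p : Fin n → ℤ), g k * ∏ i, g (p i) := ENNReal.tsum_prod'
      _ = (∑' k : ℤ, g k) * (∑' p : Fin n → ℤ, ∏ i, g (p i)) := by
          simp_rw [ENNReal.tsum_mul_left]
          rw [ENNReal.tsum_mul_right]
      _ = (∑' k : ℤ, g k) * (∑' k : ℤ, g k) ^ n := by rw [ih]
      _ = _ := (mul_comm _ _)
        


lemma tail_bound (d : ℕ) (θ : ℝ) (hθ : 0 < θ) (N : ℝ) (hN : 0 < N)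
    (μ : Measure (EuclideanSpace ℝ (Fin d)))
    (hμ : μ = volume.withDensity (fun x => ENNReal.ofReal (N * Real.exp (-‖x‖ ^ θ))))
    (hμprob : IsProbabilityMeasure μ)
    (ε : ℝ) (hε0 : 0 < ε) (hε1 : ε < 1) (s : ℝ) (hs : 0 ≤ s) :
    μ {x | s ≤ ‖x‖} ≤
      ENNReal.ofReal ((ε ^ (-(1/θ)) : ℝ) ^ d * Real.exp (-((1 - ε) * s ^ θ))) := by
  set c : ℝ := ε ^ (-(1/θ)) with hc
  have hcpos : 0 < c := Real.rpow_pos_of_pos hε0 _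
  have hcd : 0 < c ^ d := pow_pos hcpos d
  -- continuity facts
  have hcont : ∀ b : ℝ, Continuous fun x : EuclideanSpace ℝ (Fin d) =>
      ENNReal.ofReal (N * Real.exp (-(b * ‖x‖ ^ θ))) := by
    intro b
    apply ENNReal.continuous_ofReal.comp
    exact continuous_const.mul (Real.continuous_exp.comp
      ((continuous_const.mul (continuous_norm.rpow_const (fun x => Or.inr hθ.le))).neg))
  have hcont0 : Continuous fun x : EuclideanSpace ℝ (Fin d) =>
      ENNReal.ofReal (N * Real.exp (-‖x‖ ^ θ)) := by
    have := hcont 1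
    simpa using this
  -- total integral is 1
  have htot : ∫⁻ x : EuclideanSpace ℝ (Fin d), ENNReal.ofReal (N * Real.exp (-‖x‖ ^ θ)) = 1 := by
    have h1 : μ Set.univ = 1 := measure_univ
    rw [hμ, withDensity_apply _ MeasurableSet.univ, Measure.restrict_univ] at h1
    exact h1
  -- the scaled integral
  have hK : ∫⁻ x : EuclideanSpace ℝ (Fin d), ENNReal.ofReal (N * Real.exp (-(ε * ‖x‖ ^ θ))) = ENNReal.ofReal (c ^ d) := by
    have hmap : Measure.map (c • ·) (volume : Measure (EuclideanSpace ℝ (Fin d))) =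
        ENNReal.ofReal (|(c ^ (Module.finrank ℝ (EuclideanSpace ℝ (Fin d))))⁻¹|) • volume :=
      Measure.map_addHaar_smul volume hcpos.ne'
    have hfr : Module.finrank ℝ (EuclideanSpace ℝ (Fin d)) = d := finrank_euclideanSpace_fin
    have hlm : ∫⁻ x, ENNReal.ofReal (N * Real.exp (-(ε * ‖x‖ ^ θ)))
          ∂(Measure.map (c • ·) (volume : Measure (EuclideanSpace ℝ (Fin d)))) =
        ∫⁻ y : EuclideanSpace ℝ (Fin d), ENNReal.ofReal (N * Real.exp (-(ε * ‖c • y‖ ^ θ))) := by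
      exact lintegral_map (hcont ε).measurable (measurable_id.const_smul c)
    have heq : ∀ y : EuclideanSpace ℝ (Fin d),
        ENNReal.ofReal (N * Real.exp (-(ε * ‖c • y‖ ^ θ))) =
          ENNReal.ofReal (N * Real.exp (-‖y‖ ^ θ)) := by
      intro y
      congr 3
      rw [norm_smul, Real.norm_eq_abs, abs_of_pos hcpos,
        Real.mul_rpow hcpos.le (norm_nonneg _), ← mul_assoc]
      have hct : c ^ θ = ε⁻¹ := by
        rw [hc, ← Real.rpow_mul hε0.le]
        rw [show (-(1/θ)) * θ = -1 by field_simp, Real.rpow_neg_one]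
      rw [hct, mul_inv_cancel₀ hε0.ne', one_mul]
    rw [hmap, lintegral_smul_measure] at hlm
    simp_rw [heq] at hlm
    rw [htot, hfr, abs_of_pos (inv_pos.mpr hcd)] at hlm
    -- hlm : ofReal ((c^d)⁻¹) * ∫⁻ ... = 1
    calc ∫⁻ x, ENNReal.ofReal (N * Real.exp (-(ε * ‖x‖ ^ θ)))
        = 1 * ∫⁻ x, ENNReal.ofReal (N * Real.exp (-(ε * ‖x‖ ^ θ))) := (one_mul _).symm
      _ = (ENNReal.ofReal (c ^ d) * ENNReal.ofReal ((c ^ d)⁻¹)) *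
            ∫⁻ x, ENNReal.ofReal (N * Real.exp (-(ε * ‖x‖ ^ θ))) := by
          rw [← ENNReal.ofReal_mul hcd.le, mul_inv_cancel₀ hcd.ne', ENNReal.ofReal_one]
      _ = ENNReal.ofReal (c ^ d) * (ENNReal.ofReal ((c ^ d)⁻¹) *
            ∫⁻ x, ENNReal.ofReal (N * Real.exp (-(ε * ‖x‖ ^ θ)))) := by rw [mul_assoc]
      _ = ENNReal.ofReal (c ^ d) := by simp only [smul_eq_mul] at hlm; rw [hlm, mul_one]
  -- now the measure bound
  have hSmeas : MeasurableSet {x : EuclideanSpace ℝ (Fin d) | s ≤ ‖x‖} :=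
    (isClosed_le continuous_const continuous_norm).measurableSet
  rw [hμ, withDensity_apply _ hSmeas]
  have hptwise : ∀ x ∈ {x : EuclideanSpace ℝ (Fin d) | s ≤ ‖x‖},
      ENNReal.ofReal (N * Real.exp (-‖x‖ ^ θ)) ≤
        ENNReal.ofReal (Real.exp (-((1 - ε) * s ^ θ))) *
          ENNReal.ofReal (N * Real.exp (-(ε * ‖x‖ ^ θ))) := by
    intro x hx
    rw [← ENNReal.ofReal_mul (Real.exp_nonneg _)]
    apply ENNReal.ofReal_le_ofReal
    rw [mul_comm (Real.exp _) _, mul_assoc, ← Real.exp_add]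
    apply mul_le_mul_of_nonneg_left _ hN.le
    apply Real.exp_le_exp.mpr
    have hsx : s ^ θ ≤ ‖x‖ ^ θ := Real.rpow_le_rpow hs hx hθ.le
    nlinarith [Real.rpow_nonneg (norm_nonneg x) θ, Real.rpow_nonneg hs θ]
  calc ∫⁻ x in {x : EuclideanSpace ℝ (Fin d) | s ≤ ‖x‖},
        ENNReal.ofReal (N * Real.exp (-‖x‖ ^ θ))
      ≤ ∫⁻ x in {x : EuclideanSpace ℝ (Fin d) | s ≤ ‖x‖},
          ENNReal.ofReal (Real.exp (-((1 - ε) * s ^ θ))) *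
            ENNReal.ofReal (N * Real.exp (-(ε * ‖x‖ ^ θ))) := by
        exact setLIntegral_mono (by fun_prop) hptwise
    _ = ENNReal.ofReal (Real.exp (-((1 - ε) * s ^ θ))) *
          ∫⁻ x in {x : EuclideanSpace ℝ (Fin d) | s ≤ ‖x‖},
            ENNReal.ofReal (N * Real.exp (-(ε * ‖x‖ ^ θ))) := lintegral_const_mul' _ _
              ENNReal.ofReal_ne_top
    _ ≤ ENNReal.ofReal (Real.exp (-((1 - ε) * s ^ θ))) *
          ∫⁻ x, ENNReal.ofReal (N * Real.exp (-(ε * ‖x‖ ^ θ))) := by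
        gcongr
        exact Measure.restrict_le_self
    _ = ENNReal.ofReal (c ^ d * Real.exp (-((1 - ε) * s ^ θ))) := by
        rw [hK, ← ENNReal.ofReal_mul (Real.exp_nonneg _), mul_comm]

lemma lattice_sum_lt_top (d : ℕ) (hd : 1 ≤ d) (θ δ : ℝ) (hθ : 0 < θ) (hδ : 0 < δ) :
    ∑' p : Fin d → ℤ, ENNReal.ofReal (Real.exp (-(δ * ‖latticePt d p‖ ^ θ))) < ⊤ := by
  have hdd : (0:ℝ) < (d:ℝ) := by exact_mod_cast hd
  set g : ℤ → ENNReal := fun k => ENNReal.ofReal (Real.exp (-((δ/d) * |(k:ℝ)| ^ θ))) with hg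
  have hterm : ∀ p : Fin d → ℤ,
      ENNReal.ofReal (Real.exp (-(δ * ‖latticePt d p‖ ^ θ))) ≤ ∏ i, g (p i) := by
    intro p
    rw [hg, ← ENNReal.ofReal_prod_of_nonneg (fun i _ => Real.exp_nonneg _)]
    apply ENNReal.ofReal_le_ofReal
    rw [← Real.exp_sum]
    apply Real.exp_le_exp.mpr
    rw [show (∑ i : Fin d, -((δ/d) * |(p i : ℝ)| ^ θ)) =
      -(∑ i : Fin d, (δ/d) * |(p i : ℝ)| ^ θ) from Finset.sum_neg_distrib _, neg_le_neg_iff]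
    have hsum : ∑ i : Fin d, (δ/d) * |(p i : ℝ)| ^ θ ≤
        ∑ i : Fin d, (δ/d) * ‖latticePt d p‖ ^ θ := by
      apply Finset.sum_le_sum
      intro i _
      have h1 : |(p i : ℝ)| ≤ ‖latticePt d p‖ := abs_apply_le_norm (latticePt d p) i
      have h2 : |(p i : ℝ)| ^ θ ≤ ‖latticePt d p‖ ^ θ :=
        Real.rpow_le_rpow (abs_nonneg _) h1 hθ.le
      have : (0:ℝ) < δ/d := by positivity
      nlinarith
    refine hsum.trans ?_
    rw [Finset.sum_const, Finset.card_univ, Fintype.card_fin, nsmul_eq_mul]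
    rw [show (d:ℝ) * ((δ/d) * ‖latticePt d p‖ ^ θ) = δ * ‖latticePt d p‖ ^ θ by
      field_simp]
  calc ∑' p : Fin d → ℤ, ENNReal.ofReal (Real.exp (-(δ * ‖latticePt d p‖ ^ θ)))
      ≤ ∑' p : Fin d → ℤ, ∏ i, g (p i) := ENNReal.tsum_le_tsum hterm
    _ = (∑' k : ℤ, g k) ^ d := tsum_pi_prod g d
    _ < ⊤ := by
        apply ENNReal.pow_lt_top
        rw [hg, ← ENNReal.ofReal_tsum_of_nonneg (fun k => Real.exp_nonneg _)
          (summable_exp_int (δ/d) θ (by positivity) hθ)]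
        exact ENNReal.ofReal_lt_top

end AuxLemmas

set_option maxHeartbeats 1000000

/-- For perturbations with common law `μ` of density `N·exp(−‖x‖^θ)`, there are `C > 0` and
`r₁ > 0` such that for all `r ≥ r₁` and every nonempty set `A` of diameter `< r`, the
probability that some lattice point `q` with `dist(q, A) ≥ r/2` has
`dist(q + ω_q, A) ≤ r/4` is at most `C·r^{2d}·exp(−(r/8)^θ)`. -/
theorem stmt11 (d : ℕ) (hd : 1 ≤ d) (θ : ℝ) (hθ : 0 < θ) (N : ℝ) (hN : 0 < N)
    (μ : Measure (EuclideanSpace ℝ (Fin d)))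
    (hμ : μ = volume.withDensity (fun x => ENNReal.ofReal (N * Real.exp (-‖x‖ ^ θ))))
    (hμprob : IsProbabilityMeasure μ)
    {Ω : Type*} [MeasurableSpace Ω] (P : Measure Ω) [IsProbabilityMeasure P]
    (W : (Fin d → ℤ) → Ω → EuclideanSpace ℝ (Fin d))
    (hWmeas : ∀ q, Measurable (W q))
    (hlaw : ∀ q, Measure.map (W q) P = μ) :
    ∃ C : ℝ, 0 < C ∧ ∃ r₁ : ℝ, 0 < r₁ ∧
      ∀ r ≥ r₁, ∀ A : Set (EuclideanSpace ℝ (Fin d)), A.Nonempty →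
      EMetric.diam A < ENNReal.ofReal r →
      P {ω | ∃ q : Fin d → ℤ,
          r / 2 ≤ Metric.infDist (latticePt d q) A ∧
          Metric.infDist (latticePt d q + W q ω) A ≤ r / 4} ≤
        ENNReal.ofReal (C * r ^ (2 * d) * Real.exp (-(r / 8) ^ θ)) := by
  -- constants
  obtain ⟨x, hxdef⟩ : ∃ t : ℝ, t = (1/2 : ℝ) ^ θ := ⟨_, rfl⟩
  obtain ⟨y, hydef⟩ : ∃ t : ℝ, t = (1/4 : ℝ) ^ θ := ⟨_, rfl⟩
  have hx0 : 0 < x := by rw [hxdef]; exact Real.rpow_pos_of_pos (by norm_num) θ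
  have hx1 : x < 1 := by rw [hxdef]; exact Real.rpow_lt_one (by norm_num) (by norm_num) hθ
  have hxy : y = x * x := by
    rw [hxdef, hydef, ← Real.mul_rpow (by norm_num) (by norm_num)]
    norm_num
  have hy0 : 0 < y := by rw [hydef]; exact Real.rpow_pos_of_pos (by norm_num) θ
  have hy1 : y < 1 := by rw [hydef]; exact Real.rpow_lt_one (by norm_num) (by norm_num) hθ
  obtain ⟨ε, hεdef⟩ : ∃ t : ℝ, t = (1 - y) / 2 := ⟨_, rfl⟩
  have hε0 : 0 < ε := by rw [hεdef]; linarith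
  have hε1 : ε < 1 := by rw [hεdef]; linarith
  obtain ⟨δ, hδdef⟩ : ∃ t : ℝ, t = (1 - ε) * y - y ^ 2 := ⟨_, rfl⟩
  have hδ0 : 0 < δ := by rw [hδdef, hεdef]; nlinarith
  have hxε : x ≤ 1 - ε := by rw [hεdef, hxy]; nlinarith
  obtain ⟨Kr, hKrdef⟩ : ∃ t : ℝ, t = ((ε ^ (-(1/θ)) : ℝ)) ^ d := ⟨_, rfl⟩
  have hKr0 : 0 < Kr := by rw [hKrdef]; exact pow_pos (Real.rpow_pos_of_pos hε0 _) d
  obtain ⟨S, hSdef⟩ : ∃ t : ENNReal,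
    t = ∑' p : Fin d → ℤ, ENNReal.ofReal (Real.exp (-(δ * ‖latticePt d p‖ ^ θ))) := ⟨_, rfl⟩
  have hStop : S < ⊤ := by rw [hSdef]; exact lattice_sum_lt_top d hd θ δ hθ hδ0
  refine ⟨Kr * ((7:ℝ) ^ d + S.toReal),
    mul_pos hKr0 (by positivity), 4 * (1 + Real.sqrt d), by positivity, ?_⟩
  intro r hr A hAne hdiam
  obtain ⟨a, ha⟩ := hAne
  have hsd0 : 0 ≤ Real.sqrt d := Real.sqrt_nonneg _
  have hr4 : (4:ℝ) ≤ r := by linarith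
  have hr1 : (1:ℝ) ≤ r := by linarith
  have hr0 : (0:ℝ) < r := by linarith
  have hsd : Real.sqrt d ≤ r / 4 := by linarith
  obtain ⟨m, hmdef⟩ : ∃ t : Fin d → ℤ, t = fun i => ⌊a i⌋ := ⟨_, rfl⟩
  -- ‖a - latticePt d m‖ ≤ r/4
  have ham : ‖a - latticePt d m‖ ≤ r / 4 := by
    have h1 : ‖a - latticePt d m‖ ≤ Real.sqrt d := by
      rw [EuclideanSpace.norm_eq]
      rw [show (Real.sqrt (d:ℝ)) = Real.sqrt (∑ _i : Fin d, (1:ℝ)) by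
        rw [Finset.sum_const, Finset.card_univ, Fintype.card_fin, nsmul_eq_mul, mul_one]]
      apply Real.sqrt_le_sqrt
      apply Finset.sum_le_sum
      intro i _
      have h2 : ‖(a - latticePt d m) i‖ = |a i - (⌊a i⌋ : ℝ)| := by
        simp [latticePt, hmdef, Real.norm_eq_abs]
      rw [h2]
      have h3 := Int.fract_nonneg (a i)
      have h4 := Int.fract_lt_one (a i)
      rw [Int.fract] at h3 h4
      rw [abs_of_nonneg h3]
      nlinarith
    linarith
  -- lower bound on infDist via dist to a
  have hbd : Bornology.IsBounded A := by
    rw [Metric.isBounded_iff_ediam_ne_top]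
    exact hdiam.ne_top
  have hdr : Metric.diam A ≤ r :=
    ENNReal.toReal_le_of_le_ofReal hr0.le hdiam.le
  have hdistA : ∀ z : EuclideanSpace ℝ (Fin d), dist z a - r ≤ Metric.infDist z A := by
    intro z
    have := Metric.dist_le_infDist_add_diam (x := z) hbd ha
    linarith
  -- events
  obtain ⟨sq, hsqdef⟩ : ∃ t : (Fin d → ℤ) → ℝ,
    t = fun q => max (r/4) (Metric.infDist (latticePt d q) A - r/4) := ⟨_, rfl⟩
  have hsq0 : ∀ q, 0 ≤ sq q := fun q => by rw [hsqdef]; exact le_trans (by linarith) (le_max_left _ _)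
  have hSm : ∀ s : ℝ, MeasurableSet {v : EuclideanSpace ℝ (Fin d) | s ≤ ‖v‖} :=
    fun s => (isClosed_le continuous_const continuous_norm).measurableSet
  have hsub : {ω | ∃ q : Fin d → ℤ,
      r / 2 ≤ Metric.infDist (latticePt d q) A ∧
      Metric.infDist (latticePt d q + W q ω) A ≤ r / 4} ⊆
      ⋃ q : Fin d → ℤ, (W q) ⁻¹' {v | sq q ≤ ‖v‖} := by
    intro ω hω
    obtain ⟨q, hq1, hq2⟩ := hω
    apply Set.mem_iUnion.mpr ⟨q, ?_⟩
    have h5 : Metric.infDist (latticePt d q) A ≤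
        Metric.infDist (latticePt d q + W q ω) A + dist (latticePt d q) (latticePt d q + W q ω) :=
      Metric.infDist_le_infDist_add_dist
    rw [dist_self_add_right] at h5
    show sq q ≤ ‖W q ω‖
    rw [hsqdef]
    apply max_le <;> linarith
  have hPE : P {ω | ∃ q : Fin d → ℤ,
      r / 2 ≤ Metric.infDist (latticePt d q) A ∧
      Metric.infDist (latticePt d q + W q ω) A ≤ r / 4} ≤
      ∑' q : Fin d → ℤ, P ((W q) ⁻¹' {v | sq q ≤ ‖v‖}) :=
    (measure_mono hsub).trans (measure_iUnion_le _)
  have hPEq : ∀ q : Fin d → ℤ, P ((W q) ⁻¹' {v | sq q ≤ ‖v‖}) ≤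
      ENNReal.ofReal (Kr * Real.exp (-((1 - ε) * (sq q) ^ θ))) := by
    intro q
    have h6 : P ((W q) ⁻¹' {v | sq q ≤ ‖v‖}) = μ {v | sq q ≤ ‖v‖} := by
      rw [← hlaw q, Measure.map_apply (hWmeas q) (hSm _)]
    rw [h6, hKrdef]
    exact tail_bound d θ hθ N hN μ hμ hμprob ε hε0 hε1 (sq q) (hsq0 q)
  -- split into near and far
  obtain ⟨M, hMdef⟩ : ∃ t : ℤ, t = ⌈2 * r⌉ := ⟨_, rfl⟩
  have hM0 : 0 ≤ M := by rw [hMdef]; exact Int.ceil_nonneg (by linarith)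
  obtain ⟨F, hFdef⟩ : ∃ t : Finset (Fin d → ℤ), t = Finset.Icc (fun i => m i - M) (fun i => m i + M) := ⟨_, rfl⟩
  obtain ⟨cK, hcKdef⟩ : ∃ t : ENNReal, t = ENNReal.ofReal (Kr * Real.exp (-(r/8) ^ θ)) := ⟨_, rfl⟩
  have hsplit : ∀ q : Fin d → ℤ,
      ENNReal.ofReal (Kr * Real.exp (-((1 - ε) * (sq q) ^ θ))) ≤
        (if q ∈ F then cK else 0) +
          cK * ENNReal.ofReal (Real.exp (-(δ * ‖latticePt d (q - m)‖ ^ θ))) := by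
    intro q
    have hLsub : latticePt d q - latticePt d m = latticePt d (q - m) := by
      ext i
      simp only [latticePt, PiLp.toLp_apply, PiLp.sub_apply, Pi.sub_apply, Int.cast_sub]
    obtain ⟨R, hRdef⟩ : ∃ t : ℝ, t = ‖latticePt d q - latticePt d m‖ := ⟨_, rfl⟩
    have hR0 : 0 ≤ R := by rw [hRdef]; exact norm_nonneg _
    by_cases hnear : R ≤ 2 * r
    · -- near case
      have hqF : q ∈ F := by
        rw [hFdef, Finset.mem_Icc]
        constructor <;> (intro i; simp only [Pi.sub_apply, Pi.add_apply])
        all_goals {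
          have h7 : |(q i : ℝ) - (m i : ℝ)| ≤ R := by
            rw [hRdef]
            have := abs_apply_le_norm (latticePt d q - latticePt d m) i
            simpa [latticePt] using this
          have h8 : ((|q i - m i| : ℤ) : ℝ) ≤ (M : ℝ) := by
            push_cast
            calc |(q i : ℝ) - (m i : ℝ)| ≤ R := h7
              _ ≤ 2 * r := hnear
              _ ≤ (M : ℝ) := by rw [hMdef]; exact Int.le_ceil _
          have h9 : |q i - m i| ≤ M := by exact_mod_cast h8
          have := abs_le.mp h9
          omega
        }
      rw [if_pos hqF]
      have h10 : (r/8) ^ θ ≤ (1 - ε) * (sq q) ^ θ := by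
        have h11 : (r/4 : ℝ) ≤ sq q := by rw [hsqdef]; exact le_max_left _ _
        have h12 : (r/4 : ℝ) ^ θ ≤ (sq q) ^ θ := Real.rpow_le_rpow (by linarith) h11 hθ.le
        have h13 : (r/8 : ℝ) ^ θ = x * (r/4) ^ θ := by
          rw [hxdef, ← Real.mul_rpow (by norm_num) (by linarith),
            show (1/2 : ℝ) * (r/4) = r/8 by ring]
        rw [h13]
        calc x * (r/4) ^ θ ≤ (1 - ε) * (r/4) ^ θ := by
              apply mul_le_mul_of_nonneg_right hxε (Real.rpow_nonneg (by linarith) θ)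
          _ ≤ (1 - ε) * (sq q) ^ θ := by
              apply mul_le_mul_of_nonneg_left h12 (by linarith)
      have h14 : ENNReal.ofReal (Kr * Real.exp (-((1 - ε) * (sq q) ^ θ))) ≤ cK := by
        rw [hcKdef]
        apply ENNReal.ofReal_le_ofReal
        apply mul_le_mul_of_nonneg_left _ hKr0.le
        exact Real.exp_le_exp.mpr (by linarith)
      exact le_trans h14 (le_add_of_nonneg_right zero_le)
    · -- far case
      push_neg at hnear
      have hkey : (r/8) ^ θ + δ * R ^ θ ≤ (1 - ε) * (sq q) ^ θ := by
        -- sq q ≥ R/4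
        have h15 : R - r/4 ≤ dist (latticePt d q) a := by
          have h16 : dist (latticePt d q) (latticePt d m) ≤
              dist (latticePt d q) a + dist a (latticePt d m) := dist_triangle _ _ _
          have h17 : dist (latticePt d q) (latticePt d m) = R := by
            rw [hRdef, dist_eq_norm]
          have h18 : dist a (latticePt d m) ≤ r/4 := by
            rw [dist_eq_norm]; exact ham
          linarith
        have h19 : R - 5*r/4 ≤ Metric.infDist (latticePt d q) A := by
          have := hdistA (latticePt d q)
          linarith
        have h20 : R / 4 ≤ sq q := by
          rw [hsqdef]
          apply le_trans _ (le_max_right _ _)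
          linarith
        have h21 : (R/4) ^ θ ≤ (sq q) ^ θ := Real.rpow_le_rpow (by linarith) h20 hθ.le
        have h22 : (R/4) ^ θ = y * R ^ θ := by
          rw [hydef, ← Real.mul_rpow (by norm_num) hR0,
            show (1/4 : ℝ) * R = R/4 by ring]
        have h23 : (r/8) ^ θ ≤ (y * y) * R ^ θ := by
          have h24 : ((1/16 : ℝ)) ^ θ = y * y := by
            rw [hydef, ← Real.mul_rpow (by norm_num) (by norm_num)]
            norm_num
          have h25 : (r/8 : ℝ) ≤ R/16 := by linarith
          have h26 : (r/8 : ℝ) ^ θ ≤ (R/16) ^ θ := Real.rpow_le_rpow (by linarith) h25 hθ.le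
          have h27 : (R/16 : ℝ) ^ θ = (1/16 : ℝ) ^ θ * R ^ θ := by
            rw [← Real.mul_rpow (by norm_num) hR0,
              show (1/16 : ℝ) * R = R/16 by ring]
          rw [← h24]
          rw [h27] at h26
          exact h26
        have h28 : (1 - ε) * (R/4) ^ θ ≤ (1 - ε) * (sq q) ^ θ :=
          mul_le_mul_of_nonneg_left h21 (by linarith)
        have h29 : (1 - ε) * (R/4) ^ θ = (y * y) * R ^ θ + δ * R ^ θ := by
          rw [h22, hδdef]
          ring
        linarith
      have hRE : ‖latticePt d (q - m)‖ = R := by rw [hRdef, ← hLsub]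
      calc ENNReal.ofReal (Kr * Real.exp (-((1 - ε) * (sq q) ^ θ)))
          ≤ ENNReal.ofReal ((Kr * Real.exp (-(r/8) ^ θ)) *
              Real.exp (-(δ * ‖latticePt d (q - m)‖ ^ θ))) := by
            apply ENNReal.ofReal_le_ofReal
            rw [mul_assoc, ← Real.exp_add]
            apply mul_le_mul_of_nonneg_left _ hKr0.le
            apply Real.exp_le_exp.mpr
            rw [hRE]
            linarith
        _ = cK * ENNReal.ofReal (Real.exp (-(δ * ‖latticePt d (q - m)‖ ^ θ))) := by
            rw [hcKdef, ENNReal.ofReal_mul (by positivity)]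
        _ ≤ _ := le_add_self
  -- summing
  have hsum : ∑' q : Fin d → ℤ, P ((W q) ⁻¹' {v | sq q ≤ ‖v‖}) ≤
      ((F.card : ENNReal) + S) * cK := by
    calc ∑' q : Fin d → ℤ, P ((W q) ⁻¹' {v | sq q ≤ ‖v‖})
        ≤ ∑' q : Fin d → ℤ, ((if q ∈ F then cK else 0) +
            cK * ENNReal.ofReal (Real.exp (-(δ * ‖latticePt d (q - m)‖ ^ θ)))) :=
          ENNReal.tsum_le_tsum (fun q => (hPEq q).trans (hsplit q))
      _ = (∑' q : Fin d → ℤ, (if q ∈ F then cK else 0)) +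
            (∑' q : Fin d → ℤ, cK * ENNReal.ofReal
              (Real.exp (-(δ * ‖latticePt d (q - m)‖ ^ θ)))) := ENNReal.tsum_add
      _ = (F.card : ENNReal) * cK + cK * S := by
          congr 1
          · rw [tsum_eq_sum (s := F) (fun b hb => if_neg hb),
              Finset.sum_congr rfl (fun b hb => if_pos hb), Finset.sum_const,
              nsmul_eq_mul]
          · rw [ENNReal.tsum_mul_left]
            congr 1
            rw [hSdef]
            have := (Equiv.subRight m).tsum_eq
              (fun p => ENNReal.ofReal (Real.exp (-(δ * ‖latticePt d p‖ ^ θ))))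
            simpa using this
      _ = ((F.card : ENNReal) + S) * cK := by ring
  -- cardinality bound
  have hcard : ((F.card : ℝ)) ≤ (7 * r) ^ d := by
    have h40 : F.card = ((2 * M + 1).toNat) ^ d := by
      rw [hFdef, Pi.card_Icc]
      rw [Finset.prod_congr rfl (fun i _ => by
        rw [Int.card_Icc, show (m i + M + 1 - (m i - M)) = 2 * M + 1 by ring])]
      rw [Finset.prod_const, Finset.card_univ, Fintype.card_fin]
    have h41 : (((2 * M + 1).toNat : ℝ)) ≤ 7 * r := by
      have h42 : ((2 * M + 1).toNat : ℤ) = 2 * M + 1 := Int.toNat_of_nonneg (by omega)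
      have h43 : ((M : ℝ)) ≤ 2 * r + 1 := by
        rw [hMdef]
        have := Int.ceil_lt_add_one (2 * r)
        linarith
      have h44 : (((2 * M + 1).toNat : ℝ)) = 2 * (M : ℝ) + 1 := by
        exact_mod_cast congrArg (Int.cast : ℤ → ℝ) h42
      rw [h44]
      linarith
    rw [h40]
    push_cast
    exact pow_le_pow_left₀ (by positivity) h41 d
  -- final assembly
  refine hPE.trans (hsum.trans ?_)
  have hSne : S ≠ ⊤ := hStop.ne
  have h30 : ((F.card : ENNReal) + S) ≤ ENNReal.ofReal ((7*r) ^ d + S.toReal) := by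
    rw [ENNReal.ofReal_add (by positivity) ENNReal.toReal_nonneg]
    apply add_le_add
    · rw [show ((F.card : ENNReal)) = ENNReal.ofReal ((F.card : ℝ)) by
        rw [ENNReal.ofReal_natCast]]
      exact ENNReal.ofReal_le_ofReal hcard
    · rw [ENNReal.ofReal_toReal hSne]
  calc ((F.card : ENNReal) + S) * cK ≤ ENNReal.ofReal ((7*r) ^ d + S.toReal) * cK :=
        mul_le_mul_left h30 _
    _ = ENNReal.ofReal (((7*r) ^ d + S.toReal) * (Kr * Real.exp (-(r/8) ^ θ))) := by
        rw [hcKdef, ← ENNReal.ofReal_mul (by positivity)]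
    _ ≤ ENNReal.ofReal (Kr * ((7:ℝ) ^ d + S.toReal) * r ^ (2 * d) *
          Real.exp (-(r/8) ^ θ)) := by
        apply ENNReal.ofReal_le_ofReal
        have hrd : r ^ d ≤ r ^ (2 * d) := pow_le_pow_right₀ hr1 (by omega)
        have hrd1 : (1:ℝ) ≤ r ^ (2 * d) := one_le_pow₀ hr1
        have hStr : 0 ≤ S.toReal := ENNReal.toReal_nonneg
        have h31 : ((7*r) ^ d + S.toReal) ≤ Kr⁻¹ * (Kr * ((7:ℝ) ^ d + S.toReal) * r ^ (2*d)) := by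
          rw [show Kr⁻¹ * (Kr * ((7:ℝ) ^ d + S.toReal) * r ^ (2*d)) =
            (Kr⁻¹ * Kr) * (((7:ℝ) ^ d + S.toReal) * r ^ (2*d)) by ring,
            inv_mul_cancel₀ hKr0.ne', one_mul]
          rw [mul_pow]
          have h32 : (7:ℝ) ^ d * r ^ d ≤ (7:ℝ) ^ d * r ^ (2*d) := by
            apply mul_le_mul_of_nonneg_left hrd (by positivity)
          nlinarith
        have h33 := mul_le_mul_of_nonneg_right h31 (Real.exp_nonneg (-(r/8) ^ θ))
        calc ((7*r) ^ d + S.toReal) * (Kr * Real.exp (-(r/8) ^ θ))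
            = (((7*r) ^ d + S.toReal) * Real.exp (-(r/8) ^ θ)) * Kr := by ring
          _ ≤ ((Kr⁻¹ * (Kr * ((7:ℝ) ^ d + S.toReal) * r ^ (2*d))) *
                Real.exp (-(r/8) ^ θ)) * Kr := by
              apply mul_le_mul_of_nonneg_right _ hKr0.le
              exact h33
          _ = Kr * ((7:ℝ) ^ d + S.toReal) * r ^ (2 * d) * Real.exp (-(r/8) ^ θ) := by
              field_simp
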